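/- Let K be a field with algebraic closure K̄, let f, g ∈ K[x] be monic with g irreducible and nonconstant, let n = deg f ≥ 1, and let a, b ∈ K with a ≠ 0. Define σ_{a,b}(f)(x) = a^{−n} f(ax + b) and σ_{a,b}(g)(x) = a^{−deg g} g(ax + b). Then for every root α ∈ K̄ of g, the element (α − b)/a is a root of σ_{a,b}(g), and the minimal polynomial over K of σ_{a,b}(f)((α − b)/a) equals σ_{a^n,0}(w), where w is the minimal polynomial over K of f(α) and σ_{a^n,0}(w)(x) = a^{−n·deg w} w(a^n x). Equivalently, σ_{a,b}(f) ▷ σ_{a,b}(g) = σ_{a^n,0}(f ▷ g). -/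

import Mathlib

open Polynomial

/-- `sigma a b f` is the polynomial `σ_{a,b}(f)(x) = a^{-deg f} · f(a·x + b)`. -/
noncomputable def sigma {K : Type*} [Field K] (a b : K) (f : K[X]) : K[X] :=
  C (a⁻¹ ^ f.natDegree) * f.comp (C a * X + C b)

lemma minpoly_inv_mul {K L : Type*} [Field K] [Field L] [Algebra K L]
    (c : K) (hc : c ≠ 0) (y : L) (hy : IsIntegral K y) :
    minpoly K ((algebraMap K L c)⁻¹ * y) = sigma c 0 (minpoly K y) := by
  set w := minpoly K y with hw
  have hwm : w.Monic := minpoly.monic hy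
  have hw0 : w ≠ 0 := hwm.ne_zero
  set m := w.natDegree with hm
  have hcL : algebraMap K L c ≠ 0 := (_root_.map_ne_zero _).mpr hc
  have hdegc : (C c * X : K[X]).natDegree = 1 := natDegree_C_mul_X c hc
  have hcomp_deg : (w.comp (C c * X)).natDegree = m := by
    rw [natDegree_comp, hdegc, mul_one]
  have key : sigma c 0 w = C (c⁻¹ ^ m) * w.comp (C c * X) := by
    simp [sigma, map_zero, add_zero]
    left; rfl
  have hmonic : (sigma c 0 w).Monic := by
    rw [key]
    have h1 : (w.comp (C c * X)).leadingCoeff = c ^ m := by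
      rw [leadingCoeff_comp (by rw [hdegc]; norm_num)]
      simp [hwm.leadingCoeff, leadingCoeff_C_mul_X]
      rfl
    unfold Polynomial.Monic
    rw [leadingCoeff_mul, leadingCoeff_C, h1, inv_pow, inv_mul_cancel₀ (pow_ne_zero _ hc)]
  have hdeg : (sigma c 0 w).natDegree = m := by
    rw [key, natDegree_C_mul (pow_ne_zero _ (inv_ne_zero hc)), hcomp_deg]
  have hroot : Polynomial.aeval ((algebraMap K L c)⁻¹ * y) (sigma c 0 w) = 0 := by
    rw [key]
    simp only [map_mul, aeval_C, aeval_comp, map_add, aeval_X]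
    rw [mul_inv_cancel_left₀ hcL]
    simp [hw, minpoly.aeval]
  refine (minpoly.unique _ _ hmonic hroot ?_).symm
  intro q hq hq0
  have hqdeg : (q.comp (C c⁻¹ * X)).natDegree = q.natDegree := by
    rw [natDegree_comp, natDegree_C_mul_X c⁻¹ (inv_ne_zero hc), mul_one]
  have hq' : Polynomial.aeval y (q.comp (C c⁻¹ * X)) = 0 := by
    simp only [aeval_comp, map_mul, aeval_C, aeval_X, map_inv₀]
    exact hq0
  have hqne : q.comp (C c⁻¹ * X) ≠ 0 := by
    intro hcz
    rw [comp_eq_zero_iff] at hcz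
    rcases hcz with h | ⟨-, h⟩
    · exact hq.ne_zero h
    · have := congrArg natDegree h
      rw [natDegree_C_mul_X c⁻¹ (inv_ne_zero hc), natDegree_C] at this
      exact one_ne_zero this
  have hle : w.degree ≤ (q.comp (C c⁻¹ * X)).degree :=
    minpoly.degree_le_of_ne_zero K y hqne hq'
  rw [degree_eq_natDegree hw0, degree_eq_natDegree hqne, hqdeg] at hle
  rw [degree_eq_natDegree hmonic.ne_zero, degree_eq_natDegree hq.ne_zero, hdeg]
  exact_mod_cast hle

theorem sigma_wedge_equivariance (K : Type*) [Field K] (f g : K[X])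
    (hf_monic : f.Monic) (hg_monic : g.Monic)
    (hg_irr : Irreducible g) (hg_deg : 0 < g.natDegree)
    (hf_deg : 1 ≤ f.natDegree)
    (a b : K) (ha : a ≠ 0) :
    ∀ α : AlgebraicClosure K, Polynomial.aeval α g = 0 →
      Polynomial.aeval ((α - algebraMap K (AlgebraicClosure K) b) /
          algebraMap K (AlgebraicClosure K) a) (sigma a b g) = 0 ∧
      minpoly K (Polynomial.aeval ((α - algebraMap K (AlgebraicClosure K) b) /
          algebraMap K (AlgebraicClosure K) a) (sigma a b f)) =
        sigma (a ^ f.natDegree) 0 (minpoly K (Polynomial.aeval α f)) := by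
  intro α hα
  have haL : algebraMap K (AlgebraicClosure K) a ≠ 0 := (_root_.map_ne_zero _).mpr ha
  set β := (α - algebraMap K (AlgebraicClosure K) b) / algebraMap K (AlgebraicClosure K) a with hβ
  have hβα : algebraMap K (AlgebraicClosure K) a * β + algebraMap K (AlgebraicClosure K) b = α := by
    rw [hβ, mul_div_cancel₀ _ haL, sub_add_cancel]
  have heval : ∀ p : K[X], Polynomial.aeval β (sigma a b p) =
      (algebraMap K (AlgebraicClosure K) a ^ p.natDegree)⁻¹ * Polynomial.aeval α p := by
    intro p
    simp only [sigma, map_mul, aeval_C, aeval_comp, map_add, aeval_X, hβα]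
    rw [map_pow, map_inv₀, inv_pow]
  constructor
  · rw [heval, hα, mul_zero]
  · rw [heval]
    have := minpoly_inv_mul (a ^ f.natDegree) (pow_ne_zero _ ha) (Polynomial.aeval α f)
      (Algebra.IsIntegral.isIntegral _)
    rw [map_pow] at this
    exact this
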